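/- Let H be an n×n symmetric positive definite matrix and let X = (X_t)_{t∈ℤ} be a centred, square-integrable strictly stationary process satisfying X_t − e^{−H} X_{t−1} = Δ_t G with G ∈ 𝒢_H square integrable. Let γ(t) = E[X_t X_0ᵀ] and r(t) = E[(Δ_t G)(Δ_0 G)ᵀ]. Then for every t ∈ ℤ, γ(t) = e^{−tH} Σ_{k=−∞}^{t} Σ_{j=−∞}^{0} e^{kH} r(k−j) e^{jH}, where the double series converges (as the limit of the partial sums Σ_{k=−M}^{t} Σ_{j=−M}^{0} as M → ∞). -/

import Mathlib

set_option autoImplicit false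

open MeasureTheory Filter Finset Matrix Topology

variable {Ω : Type*}

/-- Two `ℤ`-indexed `ℝⁿ`-valued processes have the same finite-dimensional
distributions. -/
def SameFDD {n : ℕ} [MeasurableSpace Ω] (μ : Measure Ω)
    (X Y : ℤ → Ω → (Fin n → ℝ)) : Prop :=
  ∀ (m : ℕ) (t : Fin m → ℤ),
    μ.map (fun ω (i : Fin m) => X (t i) ω) = μ.map (fun ω (i : Fin m) => Y (t i) ω)

/-- Strict stationarity of a `ℤ`-indexed process. -/
def IsStationaryProcess {n : ℕ} [MeasurableSpace Ω] (μ : Measure Ω)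
    (X : ℤ → Ω → (Fin n → ℝ)) : Prop :=
  ∀ s : ℤ, SameFDD μ (fun t => X (t + s)) X

/-- Stationarity of increments of a `ℤ`-indexed process. -/
def HasStationaryIncrements {n : ℕ} [MeasurableSpace Ω] (μ : Measure Ω)
    (G : ℤ → Ω → (Fin n → ℝ)) : Prop :=
  ∀ s : ℤ, SameFDD μ (fun t ω => G (t + s) ω - G s ω) (fun t ω => G t ω - G 0 ω)

/-- The matrix exponential `e^{tH}` for an integer `t`. -/
noncomputable def zexp {n : ℕ} (H : Matrix (Fin n) (Fin n) ℝ) (t : ℤ) :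
    Matrix (Fin n) (Fin n) ℝ :=
  NormedSpace.exp ((t : ℝ) • H)

/-- The partial sum `Σ_{k=l}^0 e^{kH} Δ_k G`. -/
noncomputable def partialSumG {n : ℕ} (H : Matrix (Fin n) (Fin n) ℝ)
    (G : ℤ → Ω → (Fin n → ℝ)) (l : ℤ) (ω : Ω) : Fin n → ℝ :=
  ∑ k ∈ Finset.Icc l 0, (zexp H k).mulVec (G k ω - G (k - 1) ω)

/-- `G ∈ 𝒢_H` : `G` is a stationary-increment process starting from `0` whose partial
sums `Σ_{k=l}^0 e^{kH} Δ_k G` converge in probability as `l → −∞`. -/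
def MemG {n : ℕ} [MeasurableSpace Ω] (μ : Measure Ω) (H : Matrix (Fin n) (Fin n) ℝ)
    (G : ℤ → Ω → (Fin n → ℝ)) : Prop :=
  (∀ ω, G 0 ω = 0) ∧ HasStationaryIncrements μ G ∧
    ∃ ξ : Ω → (Fin n → ℝ), TendstoInMeasure μ (fun l => partialSumG H G l) Filter.atBot ξ

lemma zexp_add {n : ℕ} (H : Matrix (Fin n) (Fin n) ℝ) (a b : ℤ) :
    zexp H a * zexp H b = zexp H (a + b) := by
  unfold zexp
  have h : ((a + b : ℤ) : ℝ) • H = (a : ℝ) • H + (b : ℝ) • H := by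
    push_cast; rw [add_smul]
  rw [h, Matrix.exp_add_of_commute]
  exact (Commute.refl H).smul_right _ |>.smul_left _

lemma zexp_zero {n : ℕ} (H : Matrix (Fin n) (Fin n) ℝ) : zexp H 0 = 1 := by
  simp [zexp, NormedSpace.exp_zero]

lemma zexp_transpose {n : ℕ} {H : Matrix (Fin n) (Fin n) ℝ} (hH : H.IsHermitian) (a : ℤ) :
    (zexp H a)ᵀ = zexp H a := by
  have hHt : Hᵀ = H := hH
  rw [zexp, ← Matrix.exp_transpose, Matrix.transpose_smul, hHt]

lemma zexp_tendsto_zero {n : ℕ} {H : Matrix (Fin n) (Fin n) ℝ} (hH : H.PosDef) :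
    Tendsto (fun M : ℕ => zexp H (-(M : ℤ) - 1)) atTop (𝓝 0) := by
  have hHer := hH.1
  set U : Matrix (Fin n) (Fin n) ℝ := (Matrix.IsHermitian.eigenvectorUnitary hHer : Matrix (Fin n) (Fin n) ℝ) with hU
  have hUunit : IsUnit U :=
    ⟨Unitary.toUnits (Matrix.IsHermitian.eigenvectorUnitary hHer), rfl⟩
  have hUinv : U⁻¹ = star U :=
    Matrix.inv_eq_right_inv ((Matrix.mem_unitaryGroup_iff).mp (Matrix.IsHermitian.eigenvectorUnitary hHer).2)
  have key : ∀ c : ℝ, NormedSpace.exp (c • H)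
      = U * Matrix.diagonal (fun i => Real.exp (c * hHer.eigenvalues i)) * star U := by
    intro c
    have hdiag : c • Matrix.diagonal (RCLike.ofReal ∘ hHer.eigenvalues) =
        Matrix.diagonal (fun i => c * hHer.eigenvalues i) := by
      ext i j
      simp [Matrix.diagonal_apply, RCLike.ofReal_real_eq_id, mul_ite]
    have hc : c • H = U * Matrix.diagonal (fun i => c * hHer.eigenvalues i) * U⁻¹ := by
      rw [hUinv]
      conv_lhs => rw [Matrix.IsHermitian.spectral_theorem hHer, Unitary.conjStarAlgAut_apply]
      rw [← smul_mul_assoc, ← mul_smul_comm, hdiag]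
    rw [hc, Matrix.exp_conj U _ hUunit, Matrix.exp_diagonal, hUinv]
    congr 2
    funext i
    rw [Pi.exp_def]
    simp [Real.exp_eq_exp_ℝ]
  have hD : Tendsto (fun M : ℕ => (Matrix.diagonal
      (fun i => Real.exp (((-(M : ℤ) - 1 : ℤ) : ℝ) * hHer.eigenvalues i)) : Matrix (Fin n) (Fin n) ℝ))
      atTop (𝓝 0) := by
    refine tendsto_pi_nhds.mpr ?_
    intro i
    refine tendsto_pi_nhds.mpr ?_
    intro j
    by_cases hij : i = j
    · subst hij
      simp only [Matrix.diagonal_apply_eq]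
      have hpos := hH.eigenvalues_pos i
      have hmul : Tendsto (fun M : ℕ => ((-(M : ℤ) - 1 : ℤ) : ℝ) * hHer.eigenvalues i) atTop atBot := by
        have h1 : Tendsto (fun M : ℕ => -(M : ℝ) + (-1)) atTop atBot :=
          tendsto_atBot_add_const_right _ (-1)
            (tendsto_neg_atTop_atBot.comp (tendsto_natCast_atTop_atTop))
        have h2 := h1.atBot_mul_const hpos
        apply h2.congr
        intro M
        push_cast
        ring
      exact Real.tendsto_exp_atBot.comp hmul
    · simp only [Matrix.diagonal_apply_ne _ hij]
      exact tendsto_const_nhds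
  have hcont : Continuous (fun B : Matrix (Fin n) (Fin n) ℝ => U * B * star U) :=
    (continuous_const.matrix_mul continuous_id).matrix_mul continuous_const
  have hlim := (hcont.tendsto 0).comp hD
  simp only [Function.comp_def, Matrix.mul_zero, Matrix.zero_mul] at hlim
  have heq : (fun M : ℕ => zexp H (-(M : ℤ) - 1)) = fun M : ℕ =>
      U * Matrix.diagonal (fun i => Real.exp (((-(M : ℤ) - 1 : ℤ) : ℝ) * hHer.eigenvalues i)) * star U :=
    funext fun M => key _
  rw [heq]
  exact hlim

lemma memLp_mul_integrable {Ω : Type*} [MeasurableSpace Ω] {μ : Measure Ω}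
    {f g : Ω → ℝ} (hf : MemLp f 2 μ) (hg : MemLp g 2 μ) :
    Integrable (fun ω => f ω * g ω) μ := by
  refine Integrable.mono' ((hf.integrable_sq.add hg.integrable_sq).div_const 2)
    (hf.aestronglyMeasurable.mul hg.aestronglyMeasurable) (Filter.Eventually.of_forall fun ω => ?_)
  have h := two_mul_le_add_sq |f ω| |g ω|
  rw [Real.norm_eq_abs, abs_mul]
  rw [sq_abs, sq_abs] at h
  simp only [Pi.add_apply]
  nlinarith [abs_nonneg (f ω), abs_nonneg (g ω)]

lemma memLp_mulVec {Ω : Type*} [MeasurableSpace Ω] {μ : Measure Ω} {n : ℕ}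
    (P : Matrix (Fin n) (Fin n) ℝ) (u : Ω → Fin n → ℝ)
    (hu : ∀ a, MemLp (fun ω => u ω a) 2 μ) (i : Fin n) :
    MemLp (fun ω => (P.mulVec (u ω)) i) 2 μ := by
  have h : (fun ω => (P.mulVec (u ω)) i) = fun ω => ∑ a, P i a * u ω a := by
    funext ω; simp [Matrix.mulVec, dotProduct]
  rw [h]
  refine (memLp_finset_sum' Finset.univ
    (f := fun a ω => P i a * u ω a) (fun a _ => (hu a).const_mul _)).ae_eq ?_
  filter_upwards with ω
  simp

lemma integral_mulVec_mul {Ω : Type*} [MeasurableSpace Ω] {μ : Measure Ω} {n : ℕ}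
    (P Q : Matrix (Fin n) (Fin n) ℝ) (u v : Ω → Fin n → ℝ)
    (hu : ∀ a, MemLp (fun ω => u ω a) 2 μ) (hv : ∀ b, MemLp (fun ω => v ω b) 2 μ)
    (i i' : Fin n) :
    ∫ ω, (P.mulVec (u ω)) i * (Q.mulVec (v ω)) i' ∂μ
      = (P * Matrix.of (fun a b => ∫ ω, u ω a * v ω b ∂μ) * Qᵀ) i i' := by
  have hint : ∀ a b : Fin n, Integrable (fun ω => u ω a * v ω b) μ :=
    fun a b => memLp_mul_integrable (hu a) (hv b)
  have h1 : (fun ω => (P.mulVec (u ω)) i * (Q.mulVec (v ω)) i')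
      = fun ω => ∑ a, ∑ b, P i a * Q i' b * (u ω a * v ω b) := by
    funext ω
    simp only [Matrix.mulVec, dotProduct]
    rw [Finset.sum_mul_sum]
    exact Finset.sum_congr rfl fun a _ => Finset.sum_congr rfl fun b _ => by ring
  rw [h1, integral_finset_sum _ (fun a _ => integrable_finset_sum _
    (fun b _ => (hint a b).const_mul _))]
  have h2 : ∀ a : Fin n, ∫ ω, ∑ b, P i a * Q i' b * (u ω a * v ω b) ∂μ
      = ∑ b, P i a * Q i' b * ∫ ω, u ω a * v ω b ∂μ := by
    intro a
    rw [integral_finset_sum _ (fun b _ => (hint a b).const_mul _)]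
    exact Finset.sum_congr rfl fun b _ => integral_const_mul _ _
  simp only [h2, Matrix.mul_apply, Matrix.transpose_apply, Matrix.of_apply]
  rw [Finset.sum_comm]
  refine Finset.sum_congr rfl fun b _ => ?_
  rw [Finset.sum_mul]
  exact Finset.sum_congr rfl fun a _ => by ring

lemma tendsto_zero_mul_bdd {n : ℕ} (A B : ℕ → Matrix (Fin n) (Fin n) ℝ) (C : ℝ)
    (hA : Tendsto A atTop (𝓝 0)) (hB : ∀ M i j, |B M i j| ≤ C) :
    Tendsto (fun M => A M * B M) atTop (𝓝 0) := by
  have hA' : ∀ i j, Tendsto (fun M => A M i j) atTop (𝓝 0) := by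
    intro i j
    have h1 := tendsto_pi_nhds.mp hA i
    have h2 := tendsto_pi_nhds.mp h1 j
    simpa using h2
  refine tendsto_pi_nhds.mpr ?_
  intro i
  refine tendsto_pi_nhds.mpr ?_
  intro j
  simp only [Matrix.mul_apply, Pi.zero_apply, Matrix.zero_apply]
  have : Tendsto (fun M => ∑ a, A M i a * B M a j) atTop (𝓝 (∑ _a : Fin n, (0:ℝ))) := by
    refine tendsto_finset_sum _ fun a _ => ?_
    refine squeeze_zero_norm (a := fun M => |A M i a| * C) (fun M => ?_) ?_
    · rw [Real.norm_eq_abs, abs_mul]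
      exact mul_le_mul_of_nonneg_left (hB M a j) (abs_nonneg _)
    · have := ((hA' i a).abs).mul_const C
      simpa using this
  simpa using this

lemma bdd_mul_tendsto_zero {n : ℕ} (A B : ℕ → Matrix (Fin n) (Fin n) ℝ) (C : ℝ)
    (hA : Tendsto A atTop (𝓝 0)) (hB : ∀ M i j, |B M i j| ≤ C) :
    Tendsto (fun M => B M * A M) atTop (𝓝 0) := by
  have hA' : ∀ i j, Tendsto (fun M => A M i j) atTop (𝓝 0) := by
    intro i j
    have h1 := tendsto_pi_nhds.mp hA i
    have h2 := tendsto_pi_nhds.mp h1 j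
    simpa using h2
  refine tendsto_pi_nhds.mpr ?_
  intro i
  refine tendsto_pi_nhds.mpr ?_
  intro j
  simp only [Matrix.mul_apply, Pi.zero_apply, Matrix.zero_apply]
  have : Tendsto (fun M => ∑ a, B M i a * A M a j) atTop (𝓝 (∑ _a : Fin n, (0:ℝ))) := by
    refine tendsto_finset_sum _ fun a _ => ?_
    refine squeeze_zero_norm (a := fun M => C * |A M a j|) (fun M => ?_) ?_
    · rw [Real.norm_eq_abs, abs_mul]
      have hC : 0 ≤ C := le_trans (abs_nonneg _) (hB M i a)
      exact mul_le_mul_of_nonneg_right (hB M i a) (abs_nonneg _)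
    · have := ((hA' a j).abs).const_mul C
      simpa using this
  simpa using this

/-- for a centred square-integrable stationary `X` satisfying
`X_t − e^{−H} X_{t−1} = Δ_t G` with square-integrable `G ∈ 𝒢_H`, the
autocovariance `γ(t) = E[X_t X_0ᵀ]` is given by
`γ(t) = e^{−tH} Σ_{k=−∞}^t Σ_{j=−∞}^0 e^{kH} r(k−j) e^{jH}`, where
`r(t) = E[(Δ_t G)(Δ_0 G)ᵀ]` and the double series converges as the limit of the
partial sums over `k ∈ [−M, t]`, `j ∈ [−M, 0]` as `M → ∞`. -/
theorem stmt7 {n : ℕ} [MeasurableSpace Ω] (μ : Measure Ω) [IsProbabilityMeasure μ]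
    (H : Matrix (Fin n) (Fin n) ℝ) (hH : H.PosDef)
    (X G : ℤ → Ω → (Fin n → ℝ))
    (hmX : ∀ t, Measurable (X t)) (hmG : ∀ t, Measurable (G t))
    (hX : IsStationaryProcess μ X)
    (hcent : ∀ (t : ℤ) (i : Fin n), ∫ ω, X t ω i ∂μ = 0)
    (hL2X : ∀ (t : ℤ) (i : Fin n), MemLp (fun ω => X t ω i) 2 μ)
    (hL2G : ∀ (t : ℤ) (i : Fin n), MemLp (fun ω => G t ω i) 2 μ)
    (hG : MemG μ H G)
    (heq : ∀ (t : ℤ) (ω : Ω),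
      X t ω - (NormedSpace.exp (-H)).mulVec (X (t - 1) ω) = G t ω - G (t - 1) ω)
    (γ r : ℤ → Matrix (Fin n) (Fin n) ℝ)
    (hγ : ∀ t : ℤ, γ t = Matrix.of fun i j => ∫ ω, X t ω i * X 0 ω j ∂μ)
    (hr : ∀ t : ℤ, r t = Matrix.of fun i j =>
      ∫ ω, (G t ω - G (t - 1) ω) i * (G 0 ω - G (-1) ω) j ∂μ) :
    ∀ t : ℤ, Tendsto
      (fun M : ℕ => zexp H (-t) *
        ∑ k ∈ Finset.Icc (-(M : ℤ)) t, ∑ j ∈ Finset.Icc (-(M : ℤ)) 0,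
          zexp H k * r (k - j) * zexp H j)
      Filter.atTop (𝓝 (γ t)) := by
  -- stationarity of second moments of X
  have hstatX : ∀ (a b : ℤ) (i j : Fin n),
      ∫ ω, X a ω i * X b ω j ∂μ = γ (a - b) i j := by
    intro a b i j
    have h := hX b 2 ![a - b, 0]
    have hf : Continuous (fun v : Fin 2 → Fin n → ℝ => v 0 i * v 1 j) :=
      by fun_prop
    have hT : Measurable (fun ω (k : Fin 2) => X (![a - b, 0] k + b) ω) :=
      measurable_pi_lambda _ (fun k => hmX _)
    have hT' : Measurable (fun ω (k : Fin 2) => X (![a - b, 0] k) ω) :=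
      measurable_pi_lambda _ (fun k => hmX _)
    have hL : (fun ω => X a ω i * X b ω j)
        = fun ω => (fun v : Fin 2 → Fin n → ℝ => v 0 i * v 1 j)
            (fun k => X (![a - b, 0] k + b) ω) := by
      funext ω
      simp only [Matrix.cons_val_zero, Matrix.cons_val_one, Matrix.head_cons]
      rw [sub_add_cancel, zero_add]
    have hR : (fun ω => X (a - b) ω i * X 0 ω j)
        = fun ω => (fun v : Fin 2 → Fin n → ℝ => v 0 i * v 1 j)
            (fun k => X (![a - b, 0] k) ω) := by
      funext ω
      simp only [Matrix.cons_val_zero, Matrix.cons_val_one, Matrix.head_cons]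
    calc ∫ ω, X a ω i * X b ω j ∂μ
        = ∫ ω, (fun v : Fin 2 → Fin n → ℝ => v 0 i * v 1 j)
            (fun k => X (![a - b, 0] k + b) ω) ∂μ := by rw [← hL]
      _ = ∫ ω, (fun v : Fin 2 → Fin n → ℝ => v 0 i * v 1 j)
            (fun k => X (![a - b, 0] k) ω) ∂μ := by
          rw [← integral_map hT.aemeasurable hf.aestronglyMeasurable, h,
            integral_map hT'.aemeasurable hf.aestronglyMeasurable]
      _ = ∫ ω, X (a - b) ω i * X 0 ω j ∂μ := by rw [← hR]
      _ = γ (a - b) i j := by rw [hγ]; rfl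
  -- stationarity of second moments of increments of G
  have hstatG : ∀ (k j : ℤ) (a b : Fin n),
      ∫ ω, (G k ω - G (k - 1) ω) a * (G j ω - G (j - 1) ω) b ∂μ = r (k - j) a b := by
    intro k j a b
    have h := hG.2.1 j 3 ![k - j, k - j - 1, -1]
    have hf : Continuous (fun v : Fin 3 → Fin n → ℝ => (v 0 a - v 1 a) * (0 - v 2 b)) :=
      by fun_prop
    have hT : Measurable (fun ω (m : Fin 3) => G (![k - j, k - j - 1, -1] m + j) ω - G j ω) :=
      measurable_pi_lambda _ (fun m => (hmG _).sub (hmG _))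
    have hT' : Measurable (fun ω (m : Fin 3) => G (![k - j, k - j - 1, -1] m) ω - G 0 ω) :=
      measurable_pi_lambda _ (fun m => (hmG _).sub (hmG _))
    have hL : (fun ω => (G k ω - G (k - 1) ω) a * (G j ω - G (j - 1) ω) b)
        = fun ω => (fun v : Fin 3 → Fin n → ℝ => (v 0 a - v 1 a) * (0 - v 2 b))
            (fun m => G (![k - j, k - j - 1, -1] m + j) ω - G j ω) := by
      funext ω
      simp only [Matrix.cons_val_zero, Matrix.cons_val_one, Matrix.head_cons,
        Matrix.cons_val_two, Matrix.tail_cons, Pi.sub_apply]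
      rw [show k - j + j = k by ring, show k - j - 1 + j = k - 1 by ring,
        show (-1 : ℤ) + j = j - 1 by ring]
      ring
    have hR : (fun ω => (G (k - j) ω - G (k - j - 1) ω) a * (G 0 ω - G (-1) ω) b)
        = fun ω => (fun v : Fin 3 → Fin n → ℝ => (v 0 a - v 1 a) * (0 - v 2 b))
            (fun m => G (![k - j, k - j - 1, -1] m) ω - G 0 ω) := by
      funext ω
      simp only [Matrix.cons_val_zero, Matrix.cons_val_one, Matrix.head_cons,
        Matrix.cons_val_two, Matrix.tail_cons, Pi.sub_apply]
      ring
    calc ∫ ω, (G k ω - G (k - 1) ω) a * (G j ω - G (j - 1) ω) b ∂μ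
        = ∫ ω, (fun v : Fin 3 → Fin n → ℝ => (v 0 a - v 1 a) * (0 - v 2 b))
            (fun m => G (![k - j, k - j - 1, -1] m + j) ω - G j ω) ∂μ := by rw [← hL]
      _ = ∫ ω, (fun v : Fin 3 → Fin n → ℝ => (v 0 a - v 1 a) * (0 - v 2 b))
            (fun m => G (![k - j, k - j - 1, -1] m) ω - G 0 ω) ∂μ := by
          rw [← integral_map hT.aemeasurable hf.aestronglyMeasurable, h,
            integral_map hT'.aemeasurable hf.aestronglyMeasurable]
      _ = ∫ ω, (G (k - j) ω - G (k - j - 1) ω) a * (G 0 ω - G (-1) ω) b ∂μ := by rw [← hR]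
      _ = r (k - j) a b := by rw [hr]; rfl
  -- L² of increments
  have hL2ΔG : ∀ (k : ℤ) (a : Fin n), MemLp (fun ω => (G k ω - G (k - 1) ω) a) 2 μ := by
    intro k a
    exact (hL2G k a).sub (hL2G (k - 1) a)
  -- telescoping identity
  have htelN : ∀ (l : ℤ) (m : ℕ) (ω : Ω),
      (∑ k ∈ Finset.Icc l (l - 1 + (m : ℤ)), (zexp H k).mulVec (G k ω - G (k - 1) ω))
        = (zexp H (l - 1 + (m : ℤ))).mulVec (X (l - 1 + (m : ℤ)) ω)
          - (zexp H (l - 1)).mulVec (X (l - 1) ω) := by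
    intro l m
    induction m with
    | zero =>
      intro ω
      rw [show l - 1 + ((0 : ℕ) : ℤ) = l - 1 by simp, Finset.Icc_eq_empty (by omega)]
      simp
    | succ m ih =>
      intro ω
      set s : ℤ := l - 1 + (m : ℤ) with hs
      have hcast : l - 1 + ((m + 1 : ℕ) : ℤ) = s + 1 := by push_cast; ring
      rw [hcast]
      have hins : Finset.Icc l (s + 1) = insert (s + 1) (Finset.Icc l s) := by
        ext x
        simp only [Finset.mem_Icc, Finset.mem_insert]
        omega
      have hnotmem : (s + 1) ∉ Finset.Icc l s := by
        simp only [Finset.mem_Icc]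
        omega
      rw [hins, Finset.sum_insert hnotmem, ih ω]
      rw [show s + 1 - 1 = s by ring]
      have hG1 : G (s + 1) ω - G s ω
          = X (s + 1) ω - (NormedSpace.exp (-H)).mulVec (X s ω) := by
        have h := (heq (s + 1) ω).symm
        rwa [show s + 1 - 1 = s by ring] at h
      rw [hG1, Matrix.mulVec_sub, Matrix.mulVec_mulVec,
        show NormedSpace.exp (-H) = zexp H (-1) by unfold zexp; norm_num,
        zexp_add, show s + 1 + -1 = s by ring]
      abel
  have htel : ∀ (l u : ℤ), l - 1 ≤ u → ∀ ω,
      (∑ k ∈ Finset.Icc l u, (zexp H k).mulVec (G k ω - G (k - 1) ω))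
        = (zexp H u).mulVec (X u ω) - (zexp H (l - 1)).mulVec (X (l - 1) ω) := by
    intro l u hu ω
    have h : u = l - 1 + ((u - (l - 1)).toNat : ℤ) := by omega
    rw [h]
    exact htelN l _ ω
  -- nonnegativity and boundedness of γ entries
  have hγ00 : ∀ a : Fin n, γ 0 a a = ∫ ω, X 0 ω a * X 0 ω a ∂μ := by
    intro a
    rw [hγ]; rfl
  have hγnonneg : ∀ a : Fin n, 0 ≤ γ 0 a a := by
    intro a
    rw [hγ00]
    exact integral_nonneg fun ω => mul_self_nonneg _
  set C : ℝ := ∑ a : Fin n, γ 0 a a with hC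
  have hbound : ∀ (s : ℤ) (i j : Fin n), |γ s i j| ≤ C := by
    intro s i j
    have h1 : γ s i j = ∫ ω, X s ω i * X 0 ω j ∂μ := by rw [hγ]; rfl
    have hint : Integrable (fun ω => X s ω i * X 0 ω j) μ :=
      memLp_mul_integrable (hL2X s i) (hL2X 0 j)
    have hsq1 : Integrable (fun ω => X s ω i * X s ω i) μ :=
      memLp_mul_integrable (hL2X s i) (hL2X s i)
    have hsq2 : Integrable (fun ω => X 0 ω j * X 0 ω j) μ :=
      memLp_mul_integrable (hL2X 0 j) (hL2X 0 j)
    have habs : |∫ ω, X s ω i * X 0 ω j ∂μ| ≤ ∫ ω, |X s ω i * X 0 ω j| ∂μ := by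
      simpa only [Real.norm_eq_abs] using
        norm_integral_le_integral_norm (μ := μ) (fun ω => X s ω i * X 0 ω j)
    have hmono : ∫ ω, |X s ω i * X 0 ω j| ∂μ
        ≤ ∫ ω, (X s ω i * X s ω i + X 0 ω j * X 0 ω j) / 2 ∂μ := by
      refine integral_mono hint.abs ((hsq1.add hsq2).div_const 2) fun ω => ?_
      have h := two_mul_le_add_sq |X s ω i| |X 0 ω j|
      rw [sq_abs, sq_abs] at h
      rw [abs_mul]
      nlinarith [abs_nonneg (X s ω i), abs_nonneg (X 0 ω j), sq_nonneg (X s ω i), sq_nonneg (X 0 ω j)]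
    have e1 : ∫ ω, X s ω i * X s ω i ∂μ = γ 0 i i := by
      have h := hstatX s s i i
      rwa [sub_self] at h
    have e2 : ∫ ω, X 0 ω j * X 0 ω j ∂μ = γ 0 j j := by
      have h := hstatX 0 0 j j
      rwa [sub_self] at h
    have hval : ∫ ω, (X s ω i * X s ω i + X 0 ω j * X 0 ω j) / 2 ∂μ
        = (γ 0 i i + γ 0 j j) / 2 := by
      rw [integral_div, integral_add hsq1 hsq2, e1, e2]
    have hii : γ 0 i i ≤ C :=
      Finset.single_le_sum (f := fun a : Fin n => γ 0 a a) (fun a _ => hγnonneg a)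
        (Finset.mem_univ i)
    have hjj : γ 0 j j ≤ C :=
      Finset.single_le_sum (f := fun a : Fin n => γ 0 a a) (fun a _ => hγnonneg a)
        (Finset.mem_univ j)
    rw [h1]
    calc |∫ ω, X s ω i * X 0 ω j ∂μ| ≤ ∫ ω, |X s ω i * X 0 ω j| ∂μ := habs
      _ ≤ (γ 0 i i + γ 0 j j) / 2 := hval ▸ hmono
      _ ≤ C := by linarith
  -- covariance entries after matrix multiplication, for X
  have hcovE : ∀ (P Q : Matrix (Fin n) (Fin n) ℝ) (a b : ℤ) (i i' : Fin n),
      ∫ ω, (P.mulVec (X a ω)) i * (Q.mulVec (X b ω)) i' ∂μ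
        = (P * γ (a - b) * Qᵀ) i i' := by
    intro P Q a b i i'
    rw [integral_mulVec_mul P Q (fun ω => X a ω) (fun ω => X b ω) (hL2X a) (hL2X b) i i']
    have hof : (Matrix.of fun i j => ∫ ω, X a ω i * X b ω j ∂μ) = γ (a - b) := by
      ext i j
      exact hstatX a b i j
    rw [hof]
  -- entries of the double-sum summands, for G
  have hrE : ∀ (k j : ℤ) (i i' : Fin n),
      (zexp H k * r (k - j) * zexp H j) i i'
        = ∫ ω, ((zexp H k).mulVec (G k ω - G (k - 1) ω)) i
            * ((zexp H j).mulVec (G j ω - G (j - 1) ω)) i' ∂μ := by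
    intro k j i i'
    rw [integral_mulVec_mul (zexp H k) (zexp H j) _ _ (hL2ΔG k) (hL2ΔG j) i i']
    have hof : (Matrix.of fun a b =>
        ∫ ω, (G k ω - G (k - 1) ω) a * (G j ω - G (j - 1) ω) b ∂μ) = r (k - j) := by
      ext a b
      exact hstatG k j a b
    rw [hof, zexp_transpose hH.1]
  intro t
  have hzz : zexp H (-t) * zexp H t = 1 := by
    rw [zexp_add, show -t + t = 0 by ring, zexp_zero]
  have hE0 : Tendsto (fun M : ℕ => zexp H (-(M : ℤ) - 1)) atTop (𝓝 0) := zexp_tendsto_zero hH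
  have h2 : Tendsto (fun M : ℕ => zexp H (-t) * zexp H (-(M : ℤ) - 1)) atTop (𝓝 0) := by
    have hc : Continuous (fun B : Matrix (Fin n) (Fin n) ℝ => zexp H (-t) * B) :=
      continuous_const.matrix_mul continuous_id
    have := (hc.tendsto 0).comp hE0
    simpa [Function.comp_def] using this
  have h1 : Tendsto (fun M : ℕ => γ (t + (M : ℤ) + 1) * zexp H (-(M : ℤ) - 1)) atTop (𝓝 0) :=
    bdd_mul_tendsto_zero _ (fun M => γ (t + (M : ℤ) + 1)) C hE0 (fun M i j => hbound _ i j)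
  have h3 : Tendsto (fun M : ℕ => zexp H (-t) * zexp H (-(M : ℤ) - 1) * γ (-(M : ℤ) - 1))
      atTop (𝓝 0) :=
    tendsto_zero_mul_bdd _ (fun M => γ (-(M : ℤ) - 1)) C h2 (fun M i j => hbound _ i j)
  have h4 : Tendsto (fun M : ℕ => zexp H (-t) * zexp H (-(M : ℤ) - 1) * γ 0 * zexp H (-(M : ℤ) - 1))
      atTop (𝓝 0) := by
    have h4a : Tendsto (fun M : ℕ => zexp H (-t) * zexp H (-(M : ℤ) - 1) * γ 0) atTop (𝓝 0) :=
      tendsto_zero_mul_bdd _ (fun _ => γ 0) C h2 (fun M i j => hbound _ i j)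
    have := h4a.mul hE0
    simpa using this
  have hlim : Tendsto (fun M : ℕ => γ t - γ (t + (M : ℤ) + 1) * zexp H (-(M : ℤ) - 1)
      - zexp H (-t) * zexp H (-(M : ℤ) - 1) * γ (-(M : ℤ) - 1)
      + zexp H (-t) * zexp H (-(M : ℤ) - 1) * γ 0 * zexp H (-(M : ℤ) - 1))
      atTop (𝓝 (γ t)) := by
    have := (((tendsto_const_nhds (x := γ t) (f := atTop)).sub h1).sub h3).add h4
    simpa using this
  refine hlim.congr' ?_
  filter_upwards [eventually_ge_atTop (-t).toNat] with M hM
  have hMt : -(M : ℤ) - 1 ≤ t := by omega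
  have hM0 : -(M : ℤ) - 1 ≤ (0 : ℤ) := by omega
  -- the main identity for fixed (large) M
  have hD : (∑ k ∈ Finset.Icc (-(M : ℤ)) t, ∑ j ∈ Finset.Icc (-(M : ℤ)) 0,
        zexp H k * r (k - j) * zexp H j)
      = zexp H t * γ t * (zexp H 0)ᵀ
        - zexp H t * γ (t + (M : ℤ) + 1) * (zexp H (-(M : ℤ) - 1))ᵀ
        - zexp H (-(M : ℤ) - 1) * γ (-(M : ℤ) - 1) * (zexp H 0)ᵀ
        + zexp H (-(M : ℤ) - 1) * γ 0 * (zexp H (-(M : ℤ) - 1))ᵀ := by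
    ext i i'
    have hui : ∀ k : ℤ, MemLp (fun ω => ((zexp H k).mulVec (G k ω - G (k - 1) ω)) i) 2 μ :=
      fun k => memLp_mulVec _ _ (hL2ΔG k) i
    have hvi : ∀ j : ℤ, MemLp (fun ω => ((zexp H j).mulVec (G j ω - G (j - 1) ω)) i') 2 μ :=
      fun j => memLp_mulVec _ _ (hL2ΔG j) i'
    have hV : MemLp (fun ω => ∑ j ∈ Finset.Icc (-(M : ℤ)) 0,
        ((zexp H j).mulVec (G j ω - G (j - 1) ω)) i') 2 μ := by
      refine (memLp_finset_sum' (Finset.Icc (-(M : ℤ)) 0)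
        (f := fun j ω => ((zexp H j).mulVec (G j ω - G (j - 1) ω)) i')
        (fun j _ => hvi j)).ae_eq ?_
      filter_upwards with ω
      simp
    have hXi : ∀ (P : Matrix (Fin n) (Fin n) ℝ) (a : ℤ) (ii : Fin n),
        MemLp (fun ω => (P.mulVec (X a ω)) ii) 2 μ :=
      fun P a ii => memLp_mulVec _ _ (hL2X a) ii
    calc (∑ k ∈ Finset.Icc (-(M : ℤ)) t, ∑ j ∈ Finset.Icc (-(M : ℤ)) 0,
          zexp H k * r (k - j) * zexp H j) i i'
        = ∑ k ∈ Finset.Icc (-(M : ℤ)) t, ∑ j ∈ Finset.Icc (-(M : ℤ)) 0,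
            ∫ ω, ((zexp H k).mulVec (G k ω - G (k - 1) ω)) i
              * ((zexp H j).mulVec (G j ω - G (j - 1) ω)) i' ∂μ := by
          simp only [Matrix.sum_apply]
          exact Finset.sum_congr rfl fun k _ => Finset.sum_congr rfl fun j _ => hrE k j i i'
      _ = ∑ k ∈ Finset.Icc (-(M : ℤ)) t,
            ∫ ω, ((zexp H k).mulVec (G k ω - G (k - 1) ω)) i
              * (∑ j ∈ Finset.Icc (-(M : ℤ)) 0,
                  ((zexp H j).mulVec (G j ω - G (j - 1) ω)) i') ∂μ := by
          refine Finset.sum_congr rfl fun k _ => ?_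
          rw [← integral_finset_sum _
            (fun j _ => memLp_mul_integrable (hui k) (hvi j))]
          congr 1
          funext ω
          rw [← Finset.mul_sum]
      _ = ∫ ω, (∑ k ∈ Finset.Icc (-(M : ℤ)) t,
            ((zexp H k).mulVec (G k ω - G (k - 1) ω)) i)
              * (∑ j ∈ Finset.Icc (-(M : ℤ)) 0,
                  ((zexp H j).mulVec (G j ω - G (j - 1) ω)) i') ∂μ := by
          rw [← integral_finset_sum _
            (fun k _ => memLp_mul_integrable (hui k) hV)]
          congr 1
          funext ω
          rw [← Finset.sum_mul]
      _ = ∫ ω, ((zexp H t).mulVec (X t ω) - (zexp H (-(M : ℤ) - 1)).mulVec (X (-(M : ℤ) - 1) ω)) i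
            * ((zexp H 0).mulVec (X 0 ω) - (zexp H (-(M : ℤ) - 1)).mulVec (X (-(M : ℤ) - 1) ω)) i' ∂μ := by
          congr 1
          funext ω
          have hA : (∑ k ∈ Finset.Icc (-(M : ℤ)) t,
              ((zexp H k).mulVec (G k ω - G (k - 1) ω)) i)
              = ((zexp H t).mulVec (X t ω)
                - (zexp H (-(M : ℤ) - 1)).mulVec (X (-(M : ℤ) - 1) ω)) i := by
            rw [← Finset.sum_apply, htel (-(M : ℤ)) t (by omega) ω]
          have hB : (∑ j ∈ Finset.Icc (-(M : ℤ)) 0,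
              ((zexp H j).mulVec (G j ω - G (j - 1) ω)) i')
              = ((zexp H 0).mulVec (X 0 ω)
                - (zexp H (-(M : ℤ) - 1)).mulVec (X (-(M : ℤ) - 1) ω)) i' := by
            rw [← Finset.sum_apply, htel (-(M : ℤ)) 0 (by omega) ω]
          rw [hA, hB]
      _ = ∫ ω, (((zexp H t).mulVec (X t ω)) i * ((zexp H 0).mulVec (X 0 ω)) i'
            - ((zexp H t).mulVec (X t ω)) i * ((zexp H (-(M : ℤ) - 1)).mulVec (X (-(M : ℤ) - 1) ω)) i'
            - ((zexp H (-(M : ℤ) - 1)).mulVec (X (-(M : ℤ) - 1) ω)) i * ((zexp H 0).mulVec (X 0 ω)) i'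
            + ((zexp H (-(M : ℤ) - 1)).mulVec (X (-(M : ℤ) - 1) ω)) i
              * ((zexp H (-(M : ℤ) - 1)).mulVec (X (-(M : ℤ) - 1) ω)) i') ∂μ := by
          congr 1
          funext ω
          simp only [Pi.sub_apply]
          ring
      _ = (zexp H t * γ (t - 0) * (zexp H 0)ᵀ) i i'
            - (zexp H t * γ (t - (-(M : ℤ) - 1)) * (zexp H (-(M : ℤ) - 1))ᵀ) i i'
            - (zexp H (-(M : ℤ) - 1) * γ ((-(M : ℤ) - 1) - 0) * (zexp H 0)ᵀ) i i'
            + (zexp H (-(M : ℤ) - 1) * γ ((-(M : ℤ) - 1) - (-(M : ℤ) - 1)) * (zexp H (-(M : ℤ) - 1))ᵀ) i i' := by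
          have i1 := memLp_mul_integrable (hXi (zexp H t) t i) (hXi (zexp H 0) 0 i')
          have i2 := memLp_mul_integrable (hXi (zexp H t) t i)
            (hXi (zexp H (-(M : ℤ) - 1)) (-(M : ℤ) - 1) i')
          have i3 := memLp_mul_integrable (hXi (zexp H (-(M : ℤ) - 1)) (-(M : ℤ) - 1) i)
            (hXi (zexp H 0) 0 i')
          have i4 := memLp_mul_integrable (hXi (zexp H (-(M : ℤ) - 1)) (-(M : ℤ) - 1) i)
            (hXi (zexp H (-(M : ℤ) - 1)) (-(M : ℤ) - 1) i')
          have i12 : Integrable (fun ω => ((zexp H t).mulVec (X t ω)) i * ((zexp H 0).mulVec (X 0 ω)) i'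
              - ((zexp H t).mulVec (X t ω)) i * ((zexp H (-(M : ℤ) - 1)).mulVec (X (-(M : ℤ) - 1) ω)) i') μ :=
            i1.sub i2
          have i123 : Integrable (fun ω => ((zexp H t).mulVec (X t ω)) i * ((zexp H 0).mulVec (X 0 ω)) i'
              - ((zexp H t).mulVec (X t ω)) i * ((zexp H (-(M : ℤ) - 1)).mulVec (X (-(M : ℤ) - 1) ω)) i'
              - ((zexp H (-(M : ℤ) - 1)).mulVec (X (-(M : ℤ) - 1) ω)) i * ((zexp H 0).mulVec (X 0 ω)) i') μ :=
            i12.sub i3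
          rw [integral_add i123 i4, integral_sub i12 i3,
            integral_sub i1 i2, hcovE, hcovE, hcovE, hcovE]
      _ = (zexp H t * γ t * (zexp H 0)ᵀ
            - zexp H t * γ (t + (M : ℤ) + 1) * (zexp H (-(M : ℤ) - 1))ᵀ
            - zexp H (-(M : ℤ) - 1) * γ (-(M : ℤ) - 1) * (zexp H 0)ᵀ
            + zexp H (-(M : ℤ) - 1) * γ 0 * (zexp H (-(M : ℤ) - 1))ᵀ) i i' := by
          rw [show t - (0 : ℤ) = t by ring, show t - (-(M : ℤ) - 1) = t + (M : ℤ) + 1 by ring,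
            show (-(M : ℤ) - 1) - 0 = -(M : ℤ) - 1 by ring, sub_self]
          simp only [Matrix.sub_apply, Matrix.add_apply]
  rw [hD, zexp_zero, Matrix.transpose_one, zexp_transpose hH.1]
  simp only [mul_sub, mul_add, mul_one, ← mul_assoc, hzz, one_mul]
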